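/- Let n ≥ 2 and let a_1, …, a_n be positive real numbers. The diagonal partial n×n matrix diag(a_1, …, a_n) is completable to a rank-one matrix in the standard simplex Δ^{nn−1} if and only if ∑_{i=1}^n √(a_i) ≤ 1. -/

import Mathlib

/-- Forward direction: completable implies the sqrt-sum bound. -/
theorem diag_comp_forward (n : ℕ) (a : Fin n → ℝ) (ha : ∀ i, 0 < a i)
    (M : Matrix (Fin n) (Fin n) ℝ) (hM0 : ∀ i j, 0 ≤ M i j)
    (hM1 : ∑ i, ∑ j, M i j = 1) (hMr : M.rank = 1) (hMd : ∀ i, M i i = a i) :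
    ∑ i, Real.sqrt (a i) ≤ 1 := by
  -- extract rank-one structure
  rw [Matrix.rank] at hMr
  obtain ⟨w, hw0, hwspan⟩ := (finrank_eq_one_iff' ).mp hMr
  have hc : ∀ j : Fin n, ∃ c : ℝ, ∀ i, c * (w : Fin n → ℝ) i = M i j := by
    intro j
    obtain ⟨c, hcw⟩ := hwspan ⟨M.mulVecLin (Pi.single j 1), LinearMap.mem_range_self _ _⟩
    refine ⟨c, fun i => ?_⟩
    have h := congrArg (Subtype.val) hcw
    have h2 := congrFun h i
    simpa [Matrix.mulVecLin_apply] using h2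
  choose c hcw using hc
  have key : ∀ i j, M i j * M j i = a i * a j := by
    intro i j
    rw [← hMd i, ← hMd j, ← hcw j i, ← hcw i j, ← hcw i i, ← hcw j j]
    ring
  have bound : ∀ i j, Real.sqrt (a i) * Real.sqrt (a j) ≤ (M i j + M j i) / 2 := by
    intro i j
    have hx := hM0 i j
    have hy := hM0 j i
    have h1 : Real.sqrt (a i) * Real.sqrt (a j) = Real.sqrt (M i j) * Real.sqrt (M j i) := by
      rw [← Real.sqrt_mul (ha i).le, ← Real.sqrt_mul hx, key]
    rw [h1]
    nlinarith [sq_nonneg (Real.sqrt (M i j) - Real.sqrt (M j i)), Real.sq_sqrt hx,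
      Real.sq_sqrt hy, Real.sqrt_nonneg (M i j), Real.sqrt_nonneg (M j i)]
  have hsq : (∑ i, Real.sqrt (a i)) ^ 2 ≤ 1 := by
    have expand : (∑ i, Real.sqrt (a i)) ^ 2
        = ∑ i, ∑ j, Real.sqrt (a i) * Real.sqrt (a j) := by
      rw [sq, Finset.sum_mul_sum]
    have h2 : ∑ i, ∑ j, Real.sqrt (a i) * Real.sqrt (a j)
        ≤ ∑ i, ∑ j, (M i j + M j i) / 2 :=
      Finset.sum_le_sum fun i _ => Finset.sum_le_sum fun j _ => bound i j
    have h3 : ∑ i, ∑ j, (M i j + M j i) / 2 = 1 := by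
      have hcomm : ∑ i, ∑ j, M j i = 1 := by rw [Finset.sum_comm]; exact hM1
      simp only [add_div, Finset.sum_add_distrib, ← Finset.sum_div]
      rw [hM1, hcomm]
      norm_num
    linarith [expand ▸ le_trans h2 (le_of_eq h3)]
  have hnn : 0 ≤ ∑ i, Real.sqrt (a i) :=
    Finset.sum_nonneg fun i _ => Real.sqrt_nonneg _
  nlinarith

theorem diagonal_completable_iff (n : ℕ) (hn : 2 ≤ n) (a : Fin n → ℝ)
    (ha : ∀ i, 0 < a i) :
    (∃ M : Matrix (Fin n) (Fin n) ℝ,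
      (∀ i j, 0 ≤ M i j) ∧ (∑ i, ∑ j, M i j = 1) ∧ M.rank = 1 ∧ ∀ i, M i i = a i) ↔
    ∑ i, Real.sqrt (a i) ≤ 1 := by
  constructor
  · rintro ⟨M, hM0, hM1, hMr, hMd⟩
    exact diag_comp_forward n a ha M hM0 hM1 hMr hMd
  · intro hs
    haveI : NeZero n := ⟨by omega⟩
    set p : ℝ := Real.sqrt (a 0) with hp_def
    set r : ℝ := (∑ i, Real.sqrt (a i)) - p with hr_def
    have hp : 0 < p := Real.sqrt_pos.mpr (ha 0)
    have hr_eq : r = ∑ i ∈ Finset.univ.erase 0, Real.sqrt (a i) := by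
      rw [hr_def, hp_def]
      rw [show ∑ i, Real.sqrt (a i)
          = Real.sqrt (a 0) + ∑ i ∈ Finset.univ.erase 0, Real.sqrt (a i) from
        (Finset.add_sum_erase _ _ (Finset.mem_univ 0)).symm]
      ring
    have hr : 0 < r := by
      have h1 : (⟨1, hn⟩ : Fin n) ∈ Finset.univ.erase (0 : Fin n) := by
        simp [Fin.ext_iff, Fin.val_zero]
      rw [hr_eq]
      exact lt_of_lt_of_le (Real.sqrt_pos.mpr (ha ⟨1, hn⟩))
        (Finset.single_le_sum (fun i _ => Real.sqrt_nonneg (a i)) h1)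
    have hpr : p + r ≤ 1 := by rw [hr_def]; linarith
    set K : ℝ := (1 - p ^ 2 - r ^ 2) / (p * r) with hK_def
    have hKpr : K * (p * r) = 1 - p ^ 2 - r ^ 2 := by
      rw [hK_def]; field_simp
    have hK2 : 2 ≤ K := by
      rw [hK_def, le_div_iff₀ (by positivity)]
      nlinarith
    set D : ℝ := Real.sqrt (K ^ 2 - 4) with hD_def
    have hD2 : D ^ 2 = K ^ 2 - 4 := Real.sq_sqrt (by nlinarith)
    have hDnn : 0 ≤ D := Real.sqrt_nonneg _
    set t : ℝ := (K + D) / 2 with ht_def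
    have ht : 0 < t := by rw [ht_def]; linarith
    have ht0 : t ≠ 0 := ne_of_gt ht
    have hquad : t * t - K * t + 1 = 0 := by
      rw [ht_def]; nlinarith
    have htt : t * (1 / t) = 1 := mul_one_div_cancel ht0
    have hinvK : 1 / t = K - t := by
      rw [div_eq_iff ht0]
      linear_combination hquad
    set u : Fin n → ℝ := fun i => Real.sqrt (a i) * (if i = 0 then t else 1) with hu_def
    set v : Fin n → ℝ := fun i => Real.sqrt (a i) * (if i = 0 then 1 / t else 1) with hv_def
    have hu0' : u 0 = p * t := by simp [hu_def, hp_def]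
    have hv0' : v 0 = p * (1 / t) := by simp [hv_def, hp_def]
    have huo : ∀ i : Fin n, i ≠ 0 → u i = Real.sqrt (a i) := by
      intro i hi; simp [hu_def, hi]
    have hvo : ∀ i : Fin n, i ≠ 0 → v i = Real.sqrt (a i) := by
      intro i hi; simp [hv_def, hi]
    have hu_nn : ∀ i, 0 ≤ u i := by
      intro i
      by_cases hi : i = 0
      · subst hi; rw [hu0']; positivity
      · rw [huo i hi]; positivity
    have hv_nn : ∀ i, 0 ≤ v i := by
      intro i
      by_cases hi : i = 0
      · subst hi; rw [hv0']; positivity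
      · rw [hvo i hi]; positivity
    have hsum_u : ∑ i, u i = p * t + r := by
      rw [← Finset.add_sum_erase _ _ (Finset.mem_univ 0), hr_eq, hu0']
      congr 1
      exact Finset.sum_congr rfl fun i hi => huo i (Finset.ne_of_mem_erase hi)
    have hsum_v : ∑ i, v i = p * (1 / t) + r := by
      rw [← Finset.add_sum_erase _ _ (Finset.mem_univ 0), hr_eq, hv0']
      congr 1
      exact Finset.sum_congr rfl fun i hi => hvo i (Finset.ne_of_mem_erase hi)
    have hprod : (∑ i, u i) * (∑ j, v j) = 1 := by
      rw [hsum_u, hsum_v, hinvK]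
      linear_combination (-(p ^ 2)) * hquad + hKpr
    have hu0pos : 0 < u 0 := by rw [hu0']; positivity
    have hv0pos : 0 < v 0 := by rw [hv0']; positivity
    refine ⟨Matrix.of fun i j => u i * v j, ?_, ?_, ?_, ?_⟩
    · intro i j
      exact mul_nonneg (hu_nn i) (hv_nn j)
    · calc ∑ i, ∑ j, u i * v j = ∑ i, u i * ∑ j, v j := by
            refine Finset.sum_congr rfl fun i _ => ?_
            rw [Finset.mul_sum]
        _ = (∑ i, u i) * (∑ j, v j) := by rw [Finset.sum_mul]
        _ = 1 := hprod
    · -- rank computation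
      have hu0 : u ≠ 0 := fun h => absurd (congrFun h 0) (by simpa using ne_of_gt hu0pos)
      have hrange : LinearMap.range (Matrix.of fun i j => u i * v j :
          Matrix (Fin n) (Fin n) ℝ).mulVecLin ≤ Submodule.span ℝ {u} := by
        rintro y ⟨x, rfl⟩
        refine Submodule.mem_span_singleton.mpr ⟨∑ j, v j * x j, ?_⟩
        funext i
        simp only [Matrix.mulVecLin_apply, Matrix.mulVec, dotProduct,
          Matrix.of_apply, Pi.smul_apply, smul_eq_mul]
        rw [Finset.sum_mul]
        refine Finset.sum_congr rfl fun j _ => ?_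
        ring
      have hle : (Matrix.of fun i j => u i * v j : Matrix (Fin n) (Fin n) ℝ).rank ≤ 1 := by
        have hmono := Submodule.finrank_mono hrange
        rwa [finrank_span_singleton hu0] at hmono
      have hne : (Matrix.of fun i j => u i * v j : Matrix (Fin n) (Fin n) ℝ).rank ≠ 0 := by
        intro h
        rw [Matrix.rank, Submodule.finrank_eq_zero] at h
        have hmem : (Matrix.of fun i j => u i * v j :
            Matrix (Fin n) (Fin n) ℝ).mulVecLin (Pi.single 0 1)
            ∈ LinearMap.range (Matrix.of fun i j => u i * v j :
              Matrix (Fin n) (Fin n) ℝ).mulVecLin := LinearMap.mem_range_self _ _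
        rw [h, Submodule.mem_bot] at hmem
        have h00 := congrFun hmem 0
        rw [Matrix.mulVecLin_apply, Matrix.mulVec_single] at h00
        simp only [Matrix.of_apply, mul_one, Pi.zero_apply] at h00
        have h00' : u 0 * v 0 = 0 := by simpa [Matrix.col] using h00
        exact absurd h00' (ne_of_gt (mul_pos hu0pos hv0pos))
      omega
    · intro i
      have hsq : Real.sqrt (a i) * Real.sqrt (a i) = a i := Real.mul_self_sqrt (ha i).le
      show u i * v i = a i
      by_cases h0 : i = 0
      · subst h0
        rw [hu0', hv0', hp_def]
        linear_combination (t * (1 / t)) * hsq + (a 0) * htt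
      · rw [huo i h0, hvo i h0, hsq]
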